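/- Let (bₙ) be a strictly increasing sequence of positive reals with f(bₙ) > bₙ and b_{n+1} > 3 f(bₙ) for all n. Define g : ℝ → ℝ by g(t) = t for t ≤ b₁, and on each interval J_k = [b_k, b_{k+1}], g is the PL map fixing the endpoints with exactly one break point at f(b_k), where g(f(b_k)) = (b_k + f(b_k))/2. Then g is a PL homeomorphism of ℝ all of whose slopes lie in the interval [1/2, 5/4]. -/
import Mathlib


/-- `f` is a `K`-quasi-isometric embedding. -/
def QIEmb {X Y : Type*} [PseudoMetricSpace X] [PseudoMetricSpace Y] (K : ℝ) (f : X → Y) : Prop :=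
  1 < K ∧ ∀ x₁ x₂ : X, dist x₁ x₂ / K - K ≤ dist (f x₁) (f x₂) ∧
    dist (f x₁) (f x₂) ≤ K * dist x₁ x₂ + K

/-- `f` is a `K`-quasi-isometry: a `K`-quasi-isometric embedding with `K`-dense image. -/
def QIsom {X Y : Type*} [PseudoMetricSpace X] [PseudoMetricSpace Y] (K : ℝ) (f : X → Y) : Prop :=
  QIEmb K f ∧ ∀ y : Y, ∃ x : X, dist (f x) y < K

/-- `f` is a quasi-isometry for some constant `K > 1`. -/
def IsQI {X Y : Type*} [PseudoMetricSpace X] [PseudoMetricSpace Y] (f : X → Y) : Prop :=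
  ∃ K : ℝ, QIsom K f

/-- Two maps are equivalent (close) if they are within bounded sup-distance. -/
def Close {X Y : Type*} [PseudoMetricSpace X] [PseudoMetricSpace Y] (f g : X → Y) : Prop :=
  ∃ M : ℝ, ∀ x : X, dist (f x) (g x) ≤ M

/-- `f` is piecewise linear: near every point it is affine on both sides
(so the break points form a discrete set). -/
def IsPL (f : ℝ → ℝ) : Prop :=
  ∀ x : ℝ, ∃ ε > (0:ℝ), ∃ a b c d : ℝ,
    (∀ t ∈ Set.Icc (x - ε) x, f t = a * t + b) ∧
    (∀ t ∈ Set.Icc x (x + ε), f t = c * t + d)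

/-- The set of slopes `Λ(f)` of a piecewise linear map. -/
def slopes (f : ℝ → ℝ) : Set ℝ :=
  {a : ℝ | ∃ b x y : ℝ, x < y ∧ ∀ t ∈ Set.Icc x y, f t = a * t + b}

/-- `f ∈ PL_δ(ℝ)`: a piecewise linear homeomorphism of `ℝ` whose slope set is bounded
away from `0` and `∞`. -/
def IsPLd (f : ℝ → ℝ) : Prop :=
  IsPL f ∧ Function.Bijective f ∧
    ∃ M : ℝ, 1 < M ∧ ∀ a ∈ slopes f, M⁻¹ < |a| ∧ |a| < M

/-- `f` is the identity near `-∞`. -/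
def IdNearNegInf (f : ℝ → ℝ) : Prop := ∃ N : ℝ, ∀ t ≤ N, f t = t

/-- `f` is the identity near `+∞`. -/
def IdNearPosInf (f : ℝ → ℝ) : Prop := ∃ N : ℝ, ∀ t ≥ N, f t = t

/-- The midpoint-displacement map: `g = id` on `(-∞, b 0]`; on each `[b k, b (k+1)]`, `g`
fixes the endpoints, is affine with slope `1/2` on `[b k, f (b k)]` (sending `f (b k)` to
the midpoint `(b k + f (b k))/2`) and affine on `[f (b k), b (k+1)]`. -/
def MidSpec (f : ℝ → ℝ) (b : ℕ → ℝ) (g : ℝ → ℝ) : Prop :=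
  (∀ t ≤ b 0, g t = t) ∧
  ∀ k : ℕ,
    (∀ t ∈ Set.Icc (b k) (f (b k)), g t = b k + (t - b k) / 2) ∧
    (∀ t ∈ Set.Icc (f (b k)) (b (k + 1)),
      g t = (b k + f (b k)) / 2 +
        ((b (k + 1) - (b k + f (b k)) / 2) / (b (k + 1) - f (b k))) * (t - f (b k)))


open Set




/-- The slope of the second piece lies in `[1/2, 5/4]`. -/
lemma midspec_slope_mem {bk fbk bk1 : ℝ} (hpos : 0 < bk) (h1 : bk < fbk)
    (h2 : 3 * fbk < bk1) :
    (bk1 - (bk + fbk) / 2) / (bk1 - fbk) ∈ Set.Icc (1/2 : ℝ) (5/4 : ℝ) := by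
  have hd : 0 < bk1 - fbk := by linarith
  rw [Set.mem_Icc, le_div_iff₀ hd, div_le_iff₀ hd]
  constructor <;> linarith

section MS

variable {f : ℝ → ℝ} {b : ℕ → ℝ} {g : ℝ → ℝ}

/-- growth of b -/
lemma midspec_b_growth (hpos : ∀ n, 0 < b n) (hfb : ∀ n, b n < f (b n))
    (hgap : ∀ n, 3 * f (b n) < b (n + 1)) : ∀ n : ℕ, (2 * (n : ℝ) + 1) * b 0 ≤ b n := by
  intro n
  induction n with
  | zero => simp
  | succ n ih =>
    have h1 := hfb n; have h2 := hgap n; have h3 := hpos 0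
    have hn : (0:ℝ) ≤ (n:ℝ) := Nat.cast_nonneg n
    push_cast
    nlinarith [mul_nonneg hn h3.le]

lemma midspec_b_unbounded (hpos : ∀ n, 0 < b n) (hfb : ∀ n, b n < f (b n))
    (hgap : ∀ n, 3 * f (b n) < b (n + 1)) : ∀ x : ℝ, ∃ n : ℕ, x < b n := by
  intro x
  obtain ⟨n, hn⟩ := exists_nat_ge (x / (2 * b 0))
  refine ⟨n, ?_⟩
  have h3 := hpos 0
  have h2 : x ≤ 2 * (n:ℝ) * b 0 := by
    rw [div_le_iff₀ (by linarith)] at hn; linarith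
  have := midspec_b_growth hpos hfb hgap (f := f) n
  linarith

lemma midspec_find_k (hpos : ∀ n, 0 < b n) (hfb : ∀ n, b n < f (b n))
    (hgap : ∀ n, 3 * f (b n) < b (n + 1)) {x : ℝ} (hx : b 0 ≤ x) :
    ∃ k : ℕ, b k ≤ x ∧ x < b (k + 1) := by
  classical
  have hex : ∃ n, x < b n := midspec_b_unbounded hpos hfb hgap x
  have h0 : Nat.find hex ≠ 0 := by
    intro h
    have := Nat.find_spec hex
    rw [h] at this; linarith
  obtain ⟨k, hk⟩ := Nat.exists_eq_succ_of_ne_zero h0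
  refine ⟨k, ?_, by have hs := Nat.find_spec hex; rwa [hk] at hs⟩
  have := Nat.find_min hex (m := k) (by omega)
  linarith [not_lt.mp this]

end MS


section MS2
variable {f : ℝ → ℝ} {b : ℕ → ℝ} {g : ℝ → ℝ}

/-- Bound within one interval `[b k, b (k+1)]`. -/
lemma midspec_piece_bound (hpos : ∀ n, 0 < b n) (hfb : ∀ n, b n < f (b n))
    (hgap : ∀ n, 3 * f (b n) < b (n + 1)) (hg : MidSpec f b g) (k : ℕ) :
    ∀ x y : ℝ, b k ≤ x → x ≤ y → y ≤ b (k + 1) →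
      (y - x) / 2 ≤ g y - g x ∧ g y - g x ≤ 5/4 * (y - x) := by
  intro x y hx hxy hy
  have hA := (hg.2 k).1
  have hB := (hg.2 k).2
  set m := f (b k) with hm
  set s := (b (k + 1) - (b k + m) / 2) / (b (k + 1) - m) with hs
  have hsmem : s ∈ Set.Icc (1/2 : ℝ) (5/4 : ℝ) :=
    midspec_slope_mem (hpos k) (hfb k) (hgap k)
  obtain ⟨hs1, hs2⟩ := Set.mem_Icc.mp hsmem
  rcases le_or_gt y m with hym | hym
  · -- both in A piece
    rw [hA x ⟨hx, by linarith⟩, hA y ⟨by linarith, hym⟩]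
    constructor <;> linarith
  · rcases le_or_gt m x with hmx | hmx
    · -- both in B piece
      rw [hB x ⟨hmx, by linarith⟩, hB y ⟨by linarith, hy⟩]
      constructor <;> nlinarith
    · -- x in A, y in B; split at m
      have hgm : g m = (b k + m) / 2 := by
        rw [hA m ⟨(hfb k).le, le_rfl⟩]; ring
      have h1 : g m - g x = (m - x) / 2 := by
        rw [hA x ⟨hx, hmx.le⟩, hgm]; ring
      have h2 : g y - g m = s * (y - m) := by
        rw [hB y ⟨hym.le, hy⟩, hgm]; ring
      have e : g y - g x = (m - x) / 2 + s * (y - m) := by linarith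
      rw [e]
      constructor <;> nlinarith

/-- Bound for all `x ≤ y ≤ b n`. -/
lemma midspec_below_bound (hpos : ∀ n, 0 < b n) (hfb : ∀ n, b n < f (b n))
    (hgap : ∀ n, 3 * f (b n) < b (n + 1)) (hg : MidSpec f b g) :
    ∀ n : ℕ, ∀ x y : ℝ, x ≤ y → y ≤ b n →
      (y - x) / 2 ≤ g y - g x ∧ g y - g x ≤ 5/4 * (y - x) := by
  intro n
  induction n with
  | zero =>
    intro x y hxy hy
    rw [hg.1 y hy, hg.1 x (le_trans hxy hy)]
    constructor <;> linarith
  | succ n ih =>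
    intro x y hxy hy
    rcases le_or_gt y (b n) with h | h
    · exact ih x y hxy h
    · rcases le_or_gt (b n) x with h2 | h2
      · exact midspec_piece_bound hpos hfb hgap hg n x y h2 hxy hy
      · have r1 := ih x (b n) h2.le le_rfl
        have r2 := midspec_piece_bound hpos hfb hgap hg n (b n) y le_rfl h.le hy
        constructor <;> linarith [r1.1, r1.2, r2.1, r2.2]

/-- Global two-sided bound. -/
lemma midspec_global_bound (hpos : ∀ n, 0 < b n) (hfb : ∀ n, b n < f (b n))
    (hgap : ∀ n, 3 * f (b n) < b (n + 1)) (hg : MidSpec f b g) :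
    ∀ x y : ℝ, x ≤ y →
      (y - x) / 2 ≤ g y - g x ∧ g y - g x ≤ 5/4 * (y - x) := by
  intro x y hxy
  obtain ⟨n, hn⟩ := midspec_b_unbounded hpos hfb hgap y
  exact midspec_below_bound hpos hfb hgap hg n x y hxy hn.le

end MS2
section MS3
variable {f : ℝ → ℝ} {b : ℕ → ℝ} {g : ℝ → ℝ}

/-- Right local affine structure. -/
lemma midspec_locR (hpos : ∀ n, 0 < b n) (hfb : ∀ n, b n < f (b n))
    (hgap : ∀ n, 3 * f (b n) < b (n + 1)) (hg : MidSpec f b g) (x : ℝ) :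
    ∃ ε > (0:ℝ), ∃ a c : ℝ, a ∈ Set.Icc (1/2 : ℝ) (5/4 : ℝ) ∧
      ∀ t ∈ Set.Icc x (x + ε), g t = a * t + c := by
  rcases lt_or_ge x (b 0) with hx | hx
  · refine ⟨b 0 - x, by linarith, 1, 0, by norm_num, fun t ht => ?_⟩
    rw [hg.1 t (by simpa using ht.2)]; ring
  · obtain ⟨k, hk1, hk2⟩ := midspec_find_k hpos hfb hgap hx
    rcases lt_or_ge x (f (b k)) with hxm | hxm
    · refine ⟨f (b k) - x, by linarith, 1/2, b k / 2, by norm_num, fun t ht => ?_⟩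
      rw [(hg.2 k).1 t ⟨by linarith [ht.1], by linarith [ht.2]⟩]; ring
    · set s := (b (k + 1) - (b k + f (b k)) / 2) / (b (k + 1) - f (b k)) with hs
      refine ⟨b (k + 1) - x, ?_, s, (b k + f (b k)) / 2 - s * f (b k),
        midspec_slope_mem (hpos k) (hfb k) (hgap k), fun t ht => ?_⟩
      · linarith
      · rw [(hg.2 k).2 t ⟨by linarith [ht.1], by linarith [ht.2]⟩]; ring

/-- Left local affine structure. -/
lemma midspec_locL (hpos : ∀ n, 0 < b n) (hfb : ∀ n, b n < f (b n))
    (hgap : ∀ n, 3 * f (b n) < b (n + 1)) (hg : MidSpec f b g) (x : ℝ) :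
    ∃ ε > (0:ℝ), ∃ a c : ℝ, a ∈ Set.Icc (1/2 : ℝ) (5/4 : ℝ) ∧
      ∀ t ∈ Set.Icc (x - ε) x, g t = a * t + c := by
  rcases le_or_gt x (b 0) with hx | hx
  · refine ⟨1, one_pos, 1, 0, by norm_num, fun t ht => ?_⟩
    rw [hg.1 t (le_trans ht.2 hx)]; ring
  · obtain ⟨k, hk1, hk2⟩ := midspec_find_k hpos hfb hgap hx.le
    rcases lt_or_ge (b k) x with hbk | hbk
    · rcases le_or_gt x (f (b k)) with hxm | hxm
      · refine ⟨x - b k, by linarith, 1/2, b k / 2, by norm_num, fun t ht => ?_⟩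
        rw [(hg.2 k).1 t ⟨by linarith [ht.1], by linarith [ht.2]⟩]; ring
      · set s := (b (k + 1) - (b k + f (b k)) / 2) / (b (k + 1) - f (b k)) with hs
        refine ⟨x - f (b k), by linarith, s, (b k + f (b k)) / 2 - s * f (b k),
          midspec_slope_mem (hpos k) (hfb k) (hgap k), fun t ht => ?_⟩
        rw [(hg.2 k).2 t ⟨by linarith [ht.1], by linarith [ht.2]⟩]; ring
    · -- x = b k, k = j + 1
      have hxb : x = b k := le_antisymm ?_ hk1
      · obtain ⟨j, rfl⟩ : ∃ j, k = j + 1 := by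
          rcases k with _ | j
          · exact absurd hxb (by intro h; rw [h] at hx; exact lt_irrefl _ hx)
          · exact ⟨j, rfl⟩
        have hj1 := hfb j; have hj2 := hgap j; have hj3 := hpos j
        set s := (b (j + 1) - (b j + f (b j)) / 2) / (b (j + 1) - f (b j)) with hs
        refine ⟨x - f (b j), by linarith, s, (b j + f (b j)) / 2 - s * f (b j),
          midspec_slope_mem (hpos j) (hfb j) (hgap j), fun t ht => ?_⟩
        rw [(hg.2 j).2 t ⟨by linarith [ht.1], by rw [← hxb]; exact ht.2⟩]; ring
      · exact hbk

end MS3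

/-- Given an increasing homeomorphism `f` of `ℝ` and a sequence `bₙ > 0` with
`f (bₙ) > bₙ` and `b_{n+1} > 3 f (bₙ)`, the map `g` specified by `MidSpec` is a PL
homeomorphism of `ℝ` all of whose slopes lie in `[1/2, 5/4]`. -/
theorem midspec_is_PL_homeo (f : ℝ → ℝ) (hmono : StrictMono f)
    (hbij : Function.Bijective f) (b : ℕ → ℝ) (hb : StrictMono b)
    (hpos : ∀ n, 0 < b n) (hfb : ∀ n, b n < f (b n))
    (hgap : ∀ n, 3 * f (b n) < b (n + 1))
    (g : ℝ → ℝ) (hg : MidSpec f b g) :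
    IsPL g ∧ Function.Bijective g ∧ slopes g ⊆ Set.Icc (1/2 : ℝ) (5/4 : ℝ) := by
  have hGB := midspec_global_bound hpos hfb hgap hg
  refine ⟨?_, ⟨?_, ?_⟩, ?_⟩
  · -- IsPL
    intro x
    obtain ⟨ε₁, hε₁, a₁, c₁, _, h₁⟩ := midspec_locL hpos hfb hgap hg x
    obtain ⟨ε₂, hε₂, a₂, c₂, _, h₂⟩ := midspec_locR hpos hfb hgap hg x
    refine ⟨min ε₁ ε₂, lt_min hε₁ hε₂, a₁, c₁, a₂, c₂, fun t ht => ?_, fun t ht => ?_⟩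
    · exact h₁ t ⟨by linarith [ht.1, min_le_left ε₁ ε₂], ht.2⟩
    · exact h₂ t ⟨ht.1, by linarith [ht.2, min_le_right ε₁ ε₂]⟩
  · -- injective
    have hsm : StrictMono g := fun x y h => by
      have := (hGB x y h.le).1; linarith
    exact hsm.injective
  · -- surjective
    have hd : ∀ x y : ℝ, dist (g x) (g y) ≤ 5/4 * dist x y := by
      intro x y
      rcases le_total x y with h | h
      · have h1 := hGB x y h
        rw [Real.dist_eq, Real.dist_eq, abs_of_nonpos (by linarith [h1.1]),
          abs_of_nonpos (by linarith)]
        linarith [h1.2]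
      · have h1 := hGB y x h
        rw [Real.dist_eq, Real.dist_eq, abs_of_nonneg (by linarith [h1.1]),
          abs_of_nonneg (by linarith)]
        linarith [h1.2]
    have hcont : Continuous g := by
      rw [Metric.continuous_iff]
      intro x ε hε
      exact ⟨ε / 2, by linarith, fun y hy =>
        lt_of_le_of_lt (hd y x) (by linarith [dist_nonneg (x := y) (y := x)])⟩
    intro z
    set x₁ := min z (b 0) with hx₁
    set x₂ := b 0 + 2 * max 0 (z - b 0) with hx₂
    have h12 : x₁ ≤ x₂ := le_trans (min_le_right _ _) (by
      have := le_max_left (0:ℝ) (z - b 0); linarith)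
    have hg1 : g x₁ = x₁ := hg.1 x₁ (min_le_right _ _)
    have hg0 : g (b 0) = b 0 := hg.1 (b 0) le_rfl
    have hz1 : g x₁ ≤ z := by rw [hg1]; exact min_le_left _ _
    have hz2 : z ≤ g x₂ := by
      have h1 := (hGB (b 0) x₂ (by have := le_max_left (0:ℝ) (z - b 0); linarith)).1
      have h2 := le_max_right (0:ℝ) (z - b 0)
      have hx2e : (x₂ - b 0) / 2 = max 0 (z - b 0) := by rw [hx₂]; ring
      rw [hx2e] at h1
      linarith
    obtain ⟨x, _, hx⟩ := intermediate_value_Icc h12 hcont.continuousOn ⟨hz1, hz2⟩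
    exact ⟨x, hx⟩
  · -- slopes
    rintro a ⟨c, x, y, hxy, hform⟩
    obtain ⟨ε, hε, a', c', ha', haff⟩ := midspec_locR hpos hfb hgap hg x
    set u := min y (x + ε) with hu
    have hxu : x < u := lt_min hxy (by linarith)
    have e1 : g x = a * x + c := hform x ⟨le_rfl, hxy.le⟩
    have e2 : g x = a' * x + c' := haff x ⟨le_rfl, by linarith⟩
    have e3 : g u = a * u + c := hform u ⟨hxu.le, min_le_left _ _⟩
    have e4 : g u = a' * u + c' := haff u ⟨hxu.le, min_le_right _ _⟩
    have h1 : a * x + c = a' * x + c' := by rw [← e1, e2]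
    have h2 : a * u + c = a' * u + c' := by rw [← e3, e4]
    have h3 : (a - a') * (u - x) = 0 := by linear_combination h2 - h1
    rcases mul_eq_zero.mp h3 with h4 | h4
    · have : a = a' := by linarith
      rw [this]; exact ha'
    · exact absurd h4 (by intro h; linarith)
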